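/- arXiv:2304.12754 — 4 statements merged into one kernel-verified Lean document; each statement's English description precedes it below -/
import Mathlib

section
/- Suppose 0 < 2a < 1 and ρ > 0. Then for every x ∈ ℝ there exists a unique t > 0 with F(t,x) = 0, and a unique s > 0 with G(s,x) = 1. -/
lemma tangent_exp (u v : ℝ) : Real.exp u * (1 + v - u) ≤ Real.exp v := by
  have h := Real.add_one_le_exp (v - u)
  have h2 := mul_le_mul_of_nonneg_left h (Real.exp_pos u).le
  rw [← Real.exp_add] at h2
  calc Real.exp u * (1 + v - u) = Real.exp u * (v - u + 1) := by ring
    _ ≤ Real.exp (u + (v - u)) := h2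
    _ = Real.exp v := by ring_nf

lemma F_unique (ρ a c : ℝ) (ha : 0 < a) (hc : 0 < c)
    (s t : ℝ) (hs : 0 < s) (ht : 0 < t)
    (hfs : a + c * (1 - Real.exp (-ρ * s)) - s = 0)
    (hft : a + c * (1 - Real.exp (-ρ * t)) - t = 0) : s = t := by
  have key : ∀ s t : ℝ, 0 < s → s < t →
      a + c * (1 - Real.exp (-ρ * s)) - s = 0 →
      a + c * (1 - Real.exp (-ρ * t)) - t = 0 → False := by
    intro s t hs hst hfs hft
    have h1 := tangent_exp (-ρ * s) 0
    have h2 := tangent_exp (-ρ * s) (-ρ * t)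
    rw [Real.exp_zero] at h1
    nlinarith [mul_le_mul_of_nonneg_left h1 (sub_pos.2 hst).le,
      mul_le_mul_of_nonneg_left h2 hs.le, Real.exp_pos (-ρ * s), Real.exp_pos (-ρ * t),
      mul_pos hc (sub_pos.2 hst)]
  rcases lt_trichotomy s t with h | h | h
  · exact absurd (key s t hs h hfs hft) not_false
  · exact h
  · exact absurd (key t s ht h hft hfs) not_false

lemma G_unique (ρ a c : ℝ) (ha : a < 1) (hc : 0 < c)
    (s t : ℝ) (hs : 0 < s) (ht : 0 < t)
    (hfs : a + c * (Real.exp (ρ * s) - 1) - s = 1)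
    (hft : a + c * (Real.exp (ρ * t) - 1) - t = 1) : s = t := by
  have key : ∀ s t : ℝ, 0 < s → s < t →
      a + c * (Real.exp (ρ * s) - 1) - s = 1 →
      a + c * (Real.exp (ρ * t) - 1) - t = 1 → False := by
    intro s t hs hst hfs hft
    have h1 := tangent_exp (ρ * s) 0
    have h2 := tangent_exp (ρ * s) (ρ * t)
    rw [Real.exp_zero] at h1
    nlinarith [mul_le_mul_of_nonneg_left h1 (sub_pos.2 hst).le,
      mul_le_mul_of_nonneg_left h2 hs.le, Real.exp_pos (ρ * s), Real.exp_pos (ρ * t),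
      mul_pos hc (sub_pos.2 hst)]
  rcases lt_trichotomy s t with h | h | h
  · exact absurd (key s t hs h hfs hft) not_false
  · exact h
  · exact absurd (key t s ht h hft hfs) not_false

lemma F_exists (ρ a c : ℝ) (ha : 0 < a) (hc : 0 < c) :
    ∃ t : ℝ, 0 < t ∧ a + c * (1 - Real.exp (-ρ * t)) - t = 0 := by
  set f : ℝ → ℝ := fun t => a + c * (1 - Real.exp (-ρ * t)) - t with hf
  have hcont : ContinuousOn f (Set.Icc 0 (a + c + 1)) := by fun_prop
  have hab : (0:ℝ) ≤ a + c + 1 := by nlinarith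
  have h0 : f 0 = a := by simp [hf]
  have hT : f (a + c + 1) < 0 := by
    have h1 : 0 < Real.exp (-ρ * (a + c + 1)) := Real.exp_pos _
    simp only [hf]
    nlinarith [mul_pos hc h1]
  have hsub := intermediate_value_Ioo' hab hcont
  obtain ⟨t, htmem, hteq⟩ := hsub ⟨hT, by rw [h0]; exact ha⟩
  exact ⟨t, htmem.1, hteq⟩

lemma G_exists (ρ a c : ℝ) (hρ : 0 < ρ) (ha : 0 < a) (ha' : a < 1) (hc : 0 < c) :
    ∃ s : ℝ, 0 < s ∧ a + c * (Real.exp (ρ * s) - 1) - s = 1 := by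
  set T : ℝ := max 1 (4 * (2 + c) / (c * ρ ^ 2)) with hTdef
  have hT1 : (1:ℝ) ≤ T := le_max_left _ _
  have hT2 : 4 * (2 + c) / (c * ρ ^ 2) ≤ T := le_max_right _ _
  have hcp : 0 < c * ρ ^ 2 := by positivity
  have hT2' : 4 * (2 + c) ≤ c * ρ ^ 2 * T := by
    rw [div_le_iff₀ hcp] at hT2; linarith [hT2]
  set g : ℝ → ℝ := fun s => a + c * (Real.exp (ρ * s) - 1) - s - 1 with hg
  have hcont : ContinuousOn g (Set.Icc 0 T) := by fun_prop
  have hab : (0:ℝ) ≤ T := by linarith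
  have h0 : g 0 = a - 1 := by simp [hg]
  have hsq : Real.exp (ρ * T) = Real.exp (ρ * T / 2) ^ 2 := by
    rw [sq, ← Real.exp_add]; ring_nf
  have hE : 1 + ρ * T / 2 ≤ Real.exp (ρ * T / 2) := by
    have := Real.add_one_le_exp (ρ * T / 2); linarith
  have hTpos : g T > 0 := by
    simp only [hg]
    have hEpos := Real.exp_pos (ρ * T / 2)
    nlinarith [mul_le_mul hE hE (by nlinarith) hEpos.le,
      mul_pos (mul_pos hc hρ) (lt_of_lt_of_le one_pos hT1)]
  have hsub := intermediate_value_Ioo hab hcont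
  obtain ⟨s, hsmem, hseq⟩ := hsub ⟨by rw [h0]; linarith, hTpos⟩
  refine ⟨s, hsmem.1, ?_⟩
  simp only [hg] at hseq
  linarith [hseq]

theorem stmt_4 (ρ a : ℝ) (hρ : 0 < ρ) (ha : 0 < 2 * a) (ha' : 2 * a < 1) (x : ℝ) :
    (∃! t : ℝ, 0 < t ∧ a + (Real.exp x / ρ) * (1 - Real.exp (-ρ * t)) - t = 0) ∧
    (∃! s : ℝ, 0 < s ∧ a + (Real.exp x / ρ) * (Real.exp (ρ * s) - 1) - s = 1) := by
  have ha0 : 0 < a := by linarith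
  have ha1 : a < 1 := by linarith
  have hc : 0 < Real.exp x / ρ := div_pos (Real.exp_pos x) hρ
  constructor
  · obtain ⟨t, ht, heq⟩ := F_exists ρ a (Real.exp x / ρ) ha0 hc
    exact ⟨t, ⟨ht, heq⟩, fun y hy => F_unique ρ a _ ha0 hc y t hy.1 ht hy.2 heq⟩
  · obtain ⟨s, hs, heq⟩ := G_exists ρ a (Real.exp x / ρ) hρ ha0 ha1 hc
    exact ⟨s, ⟨hs, heq⟩, fun y hy => G_unique ρ a _ ha1 hc y s hy.1 hs hy.2 heq⟩
end

section
/- Let 0 < 2a < 1 and ρ > 0. The function f(t) = ρ(t - a)/(1 - e^{-ρt}) satisfies f'(t) > 0 for all t > 0, i.e., f is strictly increasing on (0, ∞). -/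
lemma aux_exp_lt (ρ t : ℝ) (hρ : 0 < ρ) (ht : 0 < t) :
    Real.exp (-ρ * t) < 1 := by
  rw [Real.exp_lt_one_iff]
  nlinarith

lemma aux_hasDeriv (ρ a t : ℝ) (hρ : 0 < ρ) (ht : 0 < t) :
    HasDerivAt (fun t : ℝ => ρ * (t - a) / (1 - Real.exp (-ρ * t)))
      ((ρ * (1 - Real.exp (-ρ * t)) -
        ρ * (t - a) * (ρ * Real.exp (-ρ * t))) / (1 - Real.exp (-ρ * t)) ^ 2) t := by
  have hd : (1 : ℝ) - Real.exp (-ρ * t) ≠ 0 := by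
    have := aux_exp_lt ρ t hρ ht; linarith
  have h1 : HasDerivAt (fun t : ℝ => ρ * (t - a)) ρ t := by
    have := ((hasDerivAt_id t).sub_const a).const_mul ρ
    simpa using this
  have h2 : HasDerivAt (fun t : ℝ => 1 - Real.exp (-ρ * t)) (ρ * Real.exp (-ρ * t)) t := by
    have he : HasDerivAt (fun t : ℝ => Real.exp (-ρ * t)) (Real.exp (-ρ * t) * (-ρ)) t := by
      have := ((hasDerivAt_id t).const_mul (-ρ)).exp
      simpa using this
    have : HasDerivAt (fun t : ℝ => 1 - Real.exp (-ρ * t)) (0 - Real.exp (-ρ * t) * (-ρ)) t :=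
      (hasDerivAt_const t (1 : ℝ)).sub he
    convert this using 1
    ring
  exact h1.div h2 hd

lemma aux_num_pos (ρ a t : ℝ) (hρ : 0 < ρ) (ha : 0 < 2 * a) (ht : 0 < t) :
    0 < (ρ * (1 - Real.exp (-ρ * t)) -
      ρ * (t - a) * (ρ * Real.exp (-ρ * t))) / (1 - Real.exp (-ρ * t)) ^ 2 := by
  have h1 : Real.exp (-ρ * t) < 1 := aux_exp_lt ρ t hρ ht
  have h2 : 0 < Real.exp (-ρ * t) := Real.exp_pos _
  apply div_pos _ (pow_pos (sub_pos.mpr h1) 2)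
  have h3 : ρ * t + 1 < Real.exp (ρ * t) := Real.add_one_lt_exp (by positivity)
  have h4 : Real.exp (ρ * t) * Real.exp (-ρ * t) = 1 := by
    rw [← Real.exp_add]; simp
  nlinarith [mul_pos (mul_pos hρ h2) (sub_pos.mpr h3), mul_pos hρ (mul_pos h2 (by linarith : (0:ℝ) < a))]

theorem stmt_9 (ρ a : ℝ) (hρ : 0 < ρ) (ha : 0 < 2 * a) (ha' : 2 * a < 1) :
    (∀ t : ℝ, 0 < t → 0 < deriv (fun t : ℝ => ρ * (t - a) / (1 - Real.exp (-ρ * t))) t) ∧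
    StrictMonoOn (fun t : ℝ => ρ * (t - a) / (1 - Real.exp (-ρ * t))) (Set.Ioi 0) := by
  have hderiv : ∀ t : ℝ, 0 < t →
      0 < deriv (fun t : ℝ => ρ * (t - a) / (1 - Real.exp (-ρ * t))) t := by
    intro t ht
    rw [(aux_hasDeriv ρ a t hρ ht).deriv]
    exact aux_num_pos ρ a t hρ ha ht
  refine ⟨hderiv, ?_⟩
  apply StrictMonoOn.mono (s := Set.Ioi 0) ?_ (le_refl _)
  apply strictMonoOn_of_deriv_pos (convex_Ioi 0)
  · intro t ht
    exact ((aux_hasDeriv ρ a t hρ ht).differentiableAt).continuousAt.continuousWithinAt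
  · intro t ht
    rw [interior_Ioi] at ht
    exact hderiv t ht
end

section
/- Let 0 < 2a < 1 and ρ > 0. The function g(t) = ρ(1 + t - a)/(e^{ρt} - 1) satisfies g'(t) < 0 for all t > 0, i.e., g is strictly decreasing on (0, ∞). -/
theorem stmt_10 (ρ a : ℝ) (hρ : 0 < ρ) (ha : 0 < 2 * a) (ha' : 2 * a < 1) :
    (∀ t : ℝ, 0 < t → deriv (fun t : ℝ => ρ * (1 + t - a) / (Real.exp (ρ * t) - 1)) t < 0) ∧
    StrictAntiOn (fun t : ℝ => ρ * (1 + t - a) / (Real.exp (ρ * t) - 1)) (Set.Ioi 0) := by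
  have ha1 : a < 1 := by linarith
  have hden : ∀ t : ℝ, 0 < t → 0 < Real.exp (ρ * t) - 1 := by
    intro t ht
    have : (1 : ℝ) < Real.exp (ρ * t) := by
      rw [Real.one_lt_exp_iff]
      positivity
    linarith
  have hderiv : ∀ t : ℝ, 0 < t →
      HasDerivAt (fun t : ℝ => ρ * (1 + t - a) / (Real.exp (ρ * t) - 1))
        ((ρ * (Real.exp (ρ * t) - 1) - ρ * (1 + t - a) * (ρ * Real.exp (ρ * t))) /
          (Real.exp (ρ * t) - 1) ^ 2) t := by
    intro t ht
    have hu : HasDerivAt (fun t : ℝ => ρ * (1 + t - a)) ρ t := by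
      have : HasDerivAt (fun t : ℝ => 1 + t - a) 1 t := by
        simpa using ((hasDerivAt_id t).const_add 1).sub_const a
      simpa [mul_one] using this.const_mul ρ
    have hv : HasDerivAt (fun t : ℝ => Real.exp (ρ * t) - 1) (ρ * Real.exp (ρ * t)) t := by
      have : HasDerivAt (fun t : ℝ => Real.exp (ρ * t)) (Real.exp (ρ * t) * ρ) t := by
        exact (Real.hasDerivAt_exp (ρ * t)).comp t (by simpa using (hasDerivAt_id t).const_mul ρ)
      simpa [mul_comm] using this.sub_const 1
    exact hu.div hv (ne_of_gt (hden t ht))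
  have hnum : ∀ t : ℝ, 0 < t →
      ρ * (Real.exp (ρ * t) - 1) - ρ * (1 + t - a) * (ρ * Real.exp (ρ * t)) < 0 := by
    intro t ht
    set E := Real.exp (ρ * t) with hE
    have hEpos : 0 < E := Real.exp_pos _
    -- E - 1 ≤ ρ t E
    have h1 : E - 1 ≤ ρ * t * E := by
      have hinv : 1 - ρ * t ≤ Real.exp (-(ρ * t)) := by
        have := Real.add_one_le_exp (-(ρ * t))
        linarith
      have : (1 - ρ * t) * E ≤ Real.exp (-(ρ * t)) * E :=
        mul_le_mul_of_nonneg_right hinv hEpos.le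
      rw [Real.exp_neg] at this
      have hE1 : Real.exp (-(ρ * t)) * E = 1 := by
        rw [← Real.exp_add]; simp
      nlinarith [hE1]
    have h2 : ρ * t * E < ρ * (1 + t - a) * E := by
      have : t < 1 + t - a := by linarith
      have := mul_lt_mul_of_pos_left this hρ
      exact mul_lt_mul_of_pos_right this hEpos
    nlinarith [hden t ht]
  have hd : ∀ t : ℝ, 0 < t →
      deriv (fun t : ℝ => ρ * (1 + t - a) / (Real.exp (ρ * t) - 1)) t < 0 := by
    intro t ht
    rw [(hderiv t ht).deriv]
    apply div_neg_of_neg_of_pos (hnum t ht)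
    exact pow_pos (hden t ht) 2
  refine ⟨hd, ?_⟩
  apply strictAntiOn_of_deriv_neg (convex_Ioi 0)
  · exact fun t ht => ((hderiv t ht).continuousAt).continuousWithinAt
  · intro t ht
    rw [interior_Ioi] at ht
    exact hd t ht
end

section
/- Let 0 < 2a < 1 and ρ > 0, with a > 0. The function f(t) = ρ(t - a)/(1 - e^{-ρt}) restricted to (a, ∞) is a strictly increasing bijection from (a, ∞) onto (0, ∞). -/
theorem stmt_12 (ρ a : ℝ) (hρ : 0 < ρ) (ha : 0 < 2 * a) (ha' : 2 * a < 1) (hapos : 0 < a) :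
    StrictMonoOn (fun t : ℝ => ρ * (t - a) / (1 - Real.exp (-ρ * t))) (Set.Ioi a) ∧
    Set.BijOn (fun t : ℝ => ρ * (t - a) / (1 - Real.exp (-ρ * t)))
      (Set.Ioi a) (Set.Ioi 0) := by
  set f : ℝ → ℝ := fun t => ρ * (t - a) / (1 - Real.exp (-ρ * t)) with hf
  have hden : ∀ t : ℝ, 0 < t → 0 < 1 - Real.exp (-ρ * t) := by
    intro t ht
    have h1 : Real.exp (-ρ * t) < 1 := by
      rw [Real.exp_lt_one_iff]
      nlinarith
    linarith
  have hderiv : ∀ t : ℝ, 0 < t → HasDerivAt f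
      ((ρ * (1 - Real.exp (-ρ * t)) - ρ * (t - a) * (ρ * Real.exp (-ρ * t))) /
        (1 - Real.exp (-ρ * t)) ^ 2) t := by
    intro t ht
    have h1 : HasDerivAt (fun t : ℝ => -ρ * t) (-ρ) t := by
      simpa using (hasDerivAt_id t).const_mul (-ρ)
    have h2 : HasDerivAt (fun t : ℝ => Real.exp (-ρ * t)) (Real.exp (-ρ * t) * (-ρ)) t :=
      (Real.hasDerivAt_exp (-ρ * t)).comp t h1
    have h3 : HasDerivAt (fun t : ℝ => 1 - Real.exp (-ρ * t)) (ρ * Real.exp (-ρ * t)) t := by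
      have := h2.const_sub (1:ℝ)
      refine this.congr_deriv ?_
      ring
    have h4 : HasDerivAt (fun t : ℝ => ρ * (t - a)) ρ t := by
      simpa using ((hasDerivAt_id t).sub_const a).const_mul ρ
    have hne : 1 - Real.exp (-ρ * t) ≠ 0 := ne_of_gt (hden t ht)
    exact h4.div h3 hne
  have hpos : ∀ t : ℝ, a < t →
      0 < (ρ * (1 - Real.exp (-ρ * t)) - ρ * (t - a) * (ρ * Real.exp (-ρ * t))) /
        (1 - Real.exp (-ρ * t)) ^ 2 := by
    intro t ht
    have ht0 : 0 < t := lt_trans hapos ht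
    have hE : 0 < Real.exp (-ρ * t) := Real.exp_pos _
    have hEe : Real.exp (-ρ * t) * Real.exp (ρ * t) = 1 := by
      rw [← Real.exp_add]; simp
    have hexp : ρ * t + 1 < Real.exp (ρ * t) := by
      have : ρ * t ≠ 0 := ne_of_gt (mul_pos hρ ht0)
      exact Real.add_one_lt_exp this
    have hnum : 0 < ρ * (1 - Real.exp (-ρ * t)) - ρ * (t - a) * (ρ * Real.exp (-ρ * t)) := by
      nlinarith [mul_pos hρ hapos, mul_pos hE (mul_pos hρ hapos),
        mul_lt_mul_of_pos_left hexp hE]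
    exact div_pos hnum (pow_pos (hden t ht0) 2)
  have hcont : ContinuousOn f (Set.Ici a) := fun t ht =>
    ((hderiv t (lt_of_lt_of_le hapos ht)).continuousAt).continuousWithinAt
  have hmono : StrictMonoOn f (Set.Ioi a) := by
    apply strictMonoOn_of_deriv_pos (convex_Ioi a)
      (hcont.mono Set.Ioi_subset_Ici_self)
    intro t ht
    rw [interior_Ioi] at ht
    rw [(hderiv t (lt_trans hapos ht)).deriv]
    exact hpos t ht
  have hfa : f a = 0 := by simp [hf]
  have hmaps : Set.MapsTo f (Set.Ioi a) (Set.Ioi 0) := by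
    intro t ht
    have ht' : a < t := ht
    exact div_pos (mul_pos hρ (by linarith)) (hden t (lt_trans hapos ht'))
  refine ⟨hmono, hmaps, hmono.injOn, ?_⟩
  intro y hy
  have hy' : (0:ℝ) < y := hy
  set T : ℝ := a + (y + 1) / ρ with hT
  have hTa : a < T := by
    have h0 : 0 < (y + 1) / ρ := div_pos (by linarith) hρ
    rw [hT]; linarith
  have hT0 : 0 < T := lt_trans hapos hTa
  have hfT : y < f T := by
    have hd := hden T hT0
    have hd1 : 1 - Real.exp (-ρ * T) < 1 := by
      have := Real.exp_pos (-ρ * T); linarith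
    have hnum : ρ * (T - a) = y + 1 := by
      rw [hT]; field_simp; ring
    have : y + 1 < f T := by
      rw [hf]
      simp only
      rw [hnum]
      rw [lt_div_iff₀ hd]
      nlinarith
    linarith
  have hIcc : Set.Icc (f a) (f T) ⊆ f '' Set.Icc a T :=
    intermediate_value_Icc (le_of_lt hTa) (hcont.mono (Set.Icc_subset_Ici_self))
  have hymem : y ∈ Set.Icc (f a) (f T) := by
    rw [hfa]; exact ⟨le_of_lt hy', le_of_lt hfT⟩
  obtain ⟨t, htmem, htv⟩ := hIcc hymem
  have hta : a < t := by
    rcases lt_or_eq_of_le htmem.1 with h | h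
    · exact h
    · exfalso; rw [← h, hfa] at htv; linarith
  exact ⟨t, hta, htv⟩
end
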